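/- arXiv:2508.12049 — 2 statements merged into one kernel-verified Lean document; each statement's English description precedes it below -/
import Mathlib

section
/- Let χ : ℝ → ℝ be defined by χ(x) = 0 for x ≤ -3, χ(x) = (1/4)(x+3)^{11} for x ∈ [-3,-2], χ(x) = (1/4)[-19(x+1)^{11} - 22(x+1)^{10} + 4] for x ∈ [-2,-1], χ(x) = 1 for x ∈ [-1,0], and χ(x) = χ(-x) for x ≥ 0. Then χ is C² on ℝ, 0 ≤ χ(x) ≤ 1 for all x, and there is an absolute constant C such that |χ'(x)|² / χ(x) + |χ''(x)|² / χ(x) ≤ C wherever χ(x) > 0. -/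
noncomputable section

def chi (x : ℝ) : ℝ :=
  let y : ℝ := -|x|
  if y ≤ -3 then 0
  else if y ≤ -2 then (1 / 4) * (y + 3) ^ 11
  else if y ≤ -1 then (1 / 4) * (-19 * (y + 1) ^ 11 - 22 * (y + 1) ^ 10 + 4)
  else 1

open Set Filter

def P (x : ℝ) : ℝ := (1/4) * (x+3)^11
def P1 (x : ℝ) : ℝ := (11/4) * (x+3)^10
def P2 (x : ℝ) : ℝ := (110/4) * (x+3)^9
def Q (x : ℝ) : ℝ := (1/4) * (-19*(x+1)^11 - 22*(x+1)^10 + 4)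
def Q1 (x : ℝ) : ℝ := (1/4) * (-209*(x+1)^10 - 220*(x+1)^9)
def Q2 (x : ℝ) : ℝ := (1/4) * (-2090*(x+1)^9 - 1980*(x+1)^8)

lemma hasDerivAt_P (x : ℝ) : HasDerivAt P (P1 x) x := by
  have h := (((hasDerivAt_id x).add_const (3:ℝ)).pow 11).const_mul (1/4 : ℝ)
  refine h.congr_deriv ?_
  simp [P1]; ring

lemma hasDerivAt_P1 (x : ℝ) : HasDerivAt P1 (P2 x) x := by
  have h := (((hasDerivAt_id x).add_const (3:ℝ)).pow 10).const_mul (11/4 : ℝ)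
  refine h.congr_deriv ?_
  simp [P2]; ring

lemma hasDerivAt_Q (x : ℝ) : HasDerivAt Q (Q1 x) x := by
  have hu := (hasDerivAt_id x).add_const (1:ℝ)
  have h := ((((hu.pow 11).const_mul (-19:ℝ)).sub ((hu.pow 10).const_mul (22:ℝ))).add_const (4:ℝ)).const_mul (1/4 : ℝ)
  refine h.congr_deriv ?_
  simp [Q1]; ring

lemma hasDerivAt_Q1 (x : ℝ) : HasDerivAt Q1 (Q2 x) x := by
  have hu := (hasDerivAt_id x).add_const (1:ℝ)
  have h := (((hu.pow 10).const_mul (-209:ℝ)).sub ((hu.pow 9).const_mul (220:ℝ))).const_mul (1/4 : ℝ)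
  refine h.congr_deriv ?_
  simp [Q2]; ring

lemma hasDerivAt_ite {a : ℝ} {g h g' h' : ℝ → ℝ}
    (hg : ∀ x, HasDerivAt g (g' x) x) (hh : ∀ x, HasDerivAt h (h' x) x)
    (hv : g a = h a) (hd : g' a = h' a) (x : ℝ) :
    HasDerivAt (fun y => if y ≤ a then g y else h y) (if x ≤ a then g' x else h' x) x := by
  rcases lt_trichotomy x a with hx | rfl | hx
  · rw [if_pos hx.le]
    exact (hg x).congr_of_eventuallyEq <|
      eventuallyEq_of_mem (Iio_mem_nhds hx) fun y hy => if_pos (le_of_lt hy)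
  · rw [if_pos le_rfl]
    have hl : HasDerivWithinAt (fun y => if y ≤ x then g y else h y) (g' x) (Iic x) x :=
      (hg x).hasDerivWithinAt.congr (fun y hy => if_pos hy) (if_pos le_rfl)
    have hr : HasDerivWithinAt (fun y => if y ≤ x then g y else h y) (g' x) (Ici x) x := by
      rw [hd]
      refine (hh x).hasDerivWithinAt.congr (fun y hy => ?_) (by simp [hv])
      rcases eq_or_lt_of_le (show x ≤ y from hy) with rfl | hy'
      · simp [hv]
      · rw [if_neg (not_le.2 hy')]
    have := hl.union hr
    rw [Iic_union_Ici] at this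
    exact this.hasDerivAt (by simp)
  · rw [if_neg (not_le.2 hx)]
    exact (hh x).congr_of_eventuallyEq <|
      eventuallyEq_of_mem (Ioi_mem_nhds hx) fun y hy => if_neg (not_le.2 hy)

def f (x : ℝ) : ℝ := if x ≤ -3 then 0 else if x ≤ -2 then P x else if x ≤ -1 then Q x else 1
def f1 (x : ℝ) : ℝ := if x ≤ -3 then 0 else if x ≤ -2 then P1 x else if x ≤ -1 then Q1 x else 0
def f2 (x : ℝ) : ℝ := if x ≤ -3 then 0 else if x ≤ -2 then P2 x else if x ≤ -1 then Q2 x else 0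

lemma hasDerivAt_f (x : ℝ) : HasDerivAt f (f1 x) x := by
  have h3 : ∀ y : ℝ, HasDerivAt (fun z => if z ≤ (-1:ℝ) then Q z else 1)
      (if y ≤ (-1:ℝ) then Q1 y else 0) y :=
    hasDerivAt_ite hasDerivAt_Q (fun y => hasDerivAt_const y 1)
      (by norm_num [Q]) (by norm_num [Q1])
  have h2 : ∀ y : ℝ, HasDerivAt (fun z => if z ≤ (-2:ℝ) then P z else if z ≤ (-1:ℝ) then Q z else 1)
      (if y ≤ (-2:ℝ) then P1 y else if y ≤ (-1:ℝ) then Q1 y else 0) y :=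
    hasDerivAt_ite hasDerivAt_P h3 (by norm_num [P, Q]) (by norm_num [P1, Q1])
  have h1 := hasDerivAt_ite (a := -3) (g := fun _ => (0:ℝ)) (g' := fun _ => (0:ℝ))
    (fun y => hasDerivAt_const y 0) h2 (by norm_num [P]) (by norm_num [P1]) x
  exact h1

lemma hasDerivAt_f1 (x : ℝ) : HasDerivAt f1 (f2 x) x := by
  have h3 : ∀ y : ℝ, HasDerivAt (fun z => if z ≤ (-1:ℝ) then Q1 z else 0)
      (if y ≤ (-1:ℝ) then Q2 y else 0) y :=
    hasDerivAt_ite hasDerivAt_Q1 (fun y => hasDerivAt_const y 0)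
      (by norm_num [Q1]) (by norm_num [Q2])
  have h2 : ∀ y : ℝ, HasDerivAt (fun z => if z ≤ (-2:ℝ) then P1 z else if z ≤ (-1:ℝ) then Q1 z else 0)
      (if y ≤ (-2:ℝ) then P2 y else if y ≤ (-1:ℝ) then Q2 y else 0) y :=
    hasDerivAt_ite hasDerivAt_P1 h3 (by norm_num [P1, Q1]) (by norm_num [P2, Q2])
  have h1 := hasDerivAt_ite (a := -3) (g := fun _ => (0:ℝ)) (g' := fun _ => (0:ℝ))
    (fun y => hasDerivAt_const y 0) h2 (by norm_num [P1]) (by norm_num [P2]) x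
  exact h1

lemma continuous_f2 : Continuous f2 := by
  have hQ2 : Continuous Q2 := by unfold Q2; fun_prop
  have hP2 : Continuous P2 := by unfold P2; fun_prop
  have h3 : Continuous fun z : ℝ => if z ≤ (-1:ℝ) then Q2 z else 0 :=
    Continuous.if_le hQ2 continuous_const continuous_id continuous_const
      (fun y hy => by norm_num [hy, Q2])
  have h2 : Continuous fun z : ℝ => if z ≤ (-2:ℝ) then P2 z else if z ≤ (-1:ℝ) then Q2 z else 0 :=
    Continuous.if_le hP2 h3 continuous_id continuous_const
      (fun y hy => by norm_num [hy, P2, Q2])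
  exact Continuous.if_le continuous_const h2 continuous_id continuous_const
    (fun y hy => by norm_num [hy, P2])

lemma chi_eq (x : ℝ) : chi x = f (-|x|) := rfl

def chi1 (x : ℝ) : ℝ := if x < 0 then f1 x else -f1 (-x)
def chi2 (x : ℝ) : ℝ := f2 (-|x|)

lemma f1_of_gt {x : ℝ} (hx : -1 < x) : f1 x = 0 := by
  unfold f1; rw [if_neg (by linarith), if_neg (by linarith), if_neg (by linarith)]

lemma f_of_gt {x : ℝ} (hx : -1 < x) : f x = 1 := by
  unfold f; rw [if_neg (by linarith), if_neg (by linarith), if_neg (by linarith)]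

lemma hasDerivAt_chi (x : ℝ) : HasDerivAt chi (chi1 x) x := by
  rcases lt_trichotomy x 0 with hx | rfl | hx
  · rw [show chi1 x = f1 x from if_pos hx]
    refine (hasDerivAt_f x).congr_of_eventuallyEq <|
      eventuallyEq_of_mem (Iio_mem_nhds hx) fun y hy => ?_
    rw [chi_eq, abs_of_neg hy, neg_neg]
  · have h0 : chi1 0 = 0 := by
      simp [chi1, f1_of_gt (by norm_num : (-1:ℝ) < 0)]
    rw [h0]
    refine (hasDerivAt_const 0 (1:ℝ)).congr_of_eventuallyEq <|
      eventuallyEq_of_mem (Ioo_mem_nhds (by norm_num : (-1:ℝ) < 0) (by norm_num : (0:ℝ) < 1))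
        fun y hy => ?_
    rw [chi_eq, f_of_gt (by rw [neg_lt, neg_neg]; exact abs_lt.2 ⟨hy.1, hy.2⟩)]
  · rw [show chi1 x = -f1 (-x) from if_neg (not_lt.2 hx.le)]
    have h := (hasDerivAt_f (-x)).comp x (hasDerivAt_neg x)
    have h' : HasDerivAt (fun y : ℝ => f (-y)) (-f1 (-x)) x := by
      refine h.congr_deriv ?_; ring
    refine h'.congr_of_eventuallyEq <|
      eventuallyEq_of_mem (Ioi_mem_nhds hx) fun y hy => ?_
    rw [chi_eq, abs_of_pos hy]

lemma hasDerivAt_chi1 (x : ℝ) : HasDerivAt chi1 (chi2 x) x := by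
  rcases lt_trichotomy x 0 with hx | rfl | hx
  · rw [show chi2 x = f2 x by rw [chi2, abs_of_neg hx, neg_neg]]
    refine (hasDerivAt_f1 x).congr_of_eventuallyEq <|
      eventuallyEq_of_mem (Iio_mem_nhds hx) fun y hy => ?_
    exact if_pos hy
  · have h0 : chi2 0 = 0 := by
      simp [chi2]; rw [f2]; norm_num [Q2]
    rw [h0]
    refine (hasDerivAt_const 0 (0:ℝ)).congr_of_eventuallyEq <|
      eventuallyEq_of_mem (Ioo_mem_nhds (by norm_num : (-1:ℝ) < 0) (by norm_num : (0:ℝ) < 1))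
        fun y hy => ?_
    rcases lt_or_ge y 0 with h | h
    · rw [show chi1 y = f1 y from if_pos h, f1_of_gt hy.1]
    · rw [show chi1 y = -f1 (-y) from if_neg (not_lt.2 h),
        f1_of_gt (by linarith [hy.2] : (-1:ℝ) < -y), neg_zero]
  · rw [show chi2 x = f2 (-x) by rw [chi2, abs_of_pos hx]]
    have h := ((hasDerivAt_f1 (-x)).comp x (hasDerivAt_neg x)).neg
    have h' : HasDerivAt (fun y : ℝ => -f1 (-y)) (f2 (-x)) x := by
      refine h.congr_deriv ?_; ring
    refine h'.congr_of_eventuallyEq <|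
      eventuallyEq_of_mem (Ioi_mem_nhds hx) fun y hy => ?_
    exact if_neg (not_lt.2 hy.le)

lemma deriv_chi : deriv chi = chi1 := funext fun x => (hasDerivAt_chi x).deriv
lemma deriv_chi1 : deriv chi1 = chi2 := funext fun x => (hasDerivAt_chi1 x).deriv

lemma contDiff_chi : ContDiff ℝ 2 chi := by
  rw [show (2 : WithTop ℕ∞) = 1 + 1 from rfl, contDiff_succ_iff_deriv]
  refine ⟨fun x => (hasDerivAt_chi x).differentiableAt, by simp, ?_⟩
  rw [deriv_chi, contDiff_one_iff_deriv, deriv_chi1]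
  exact ⟨fun x => (hasDerivAt_chi1 x).differentiableAt,
    continuous_f2.comp continuous_abs.neg⟩

lemma key {t : ℝ} (ht : 0 ≤ t) (ht1 : t ≤ 1) : 22*t^10 - 19*t^11 ≤ 3 := by
  have h0 : (0:ℝ) ≤ 1 - t := by linarith
  have hk : ∀ k : ℕ, k ≤ 10 → t^10 ≤ t^k := fun k hk =>
    pow_le_pow_of_le_one ht ht1 hk
  nlinarith [mul_nonneg h0 (sub_nonneg.2 (hk 0 (by norm_num))),
    mul_nonneg h0 (sub_nonneg.2 (hk 1 (by norm_num))),
    mul_nonneg h0 (sub_nonneg.2 (hk 2 (by norm_num))),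
    mul_nonneg h0 (sub_nonneg.2 (hk 3 (by norm_num))),
    mul_nonneg h0 (sub_nonneg.2 (hk 4 (by norm_num))),
    mul_nonneg h0 (sub_nonneg.2 (hk 5 (by norm_num))),
    mul_nonneg h0 (sub_nonneg.2 (hk 6 (by norm_num))),
    mul_nonneg h0 (sub_nonneg.2 (hk 7 (by norm_num))),
    mul_nonneg h0 (sub_nonneg.2 (hk 8 (by norm_num))),
    mul_nonneg h0 (sub_nonneg.2 (hk 9 (by norm_num))),
    mul_nonneg h0 (pow_nonneg ht 10)]

lemma f_bounds (y : ℝ) : 0 ≤ f y ∧ f y ≤ 1 := by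
  unfold f
  split_ifs with h1 h2 h3
  · norm_num
  · have hu : (0:ℝ) < y + 3 := by linarith [not_le.1 h1]
    have h11 : (y+3)^11 ≤ 1 := pow_le_one₀ hu.le (by linarith)
    have h0 : (0:ℝ) ≤ (y+3)^11 := pow_nonneg hu.le 11
    unfold P; constructor <;> nlinarith
  · have hy2 : (-2:ℝ) < y := not_le.1 h2
    obtain ⟨t, htdef⟩ : ∃ t : ℝ, t = -(y+1) := ⟨_, rfl⟩
    have hy' : y + 1 = -t := by rw [htdef]; ring
    have ht0 : 0 ≤ t := by rw [htdef]; linarith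
    have ht1 : t ≤ 1 := by rw [htdef]; linarith
    have hQ : Q y = (1/4)*(19*t^11 - 22*t^10 + 4) := by
      unfold Q; rw [hy']; ring
    have hkey := key ht0 ht1
    have h10 : (0:ℝ) ≤ t^10 := pow_nonneg ht0 10
    have h1110 : t^11 ≤ t^10 := pow_le_pow_of_le_one ht0 ht1 (by norm_num)
    rw [hQ]; constructor <;> linarith
  · norm_num

lemma quot (y : ℝ) (hy : 0 < f y) : |f1 y|^2 / f y + |f2 y|^2 / f y ≤ 10^7 := by
  have h3 : ¬ y ≤ -3 := by
    intro h; rw [f, if_pos h] at hy; exact lt_irrefl 0 hy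
  by_cases h2 : y ≤ -2
  · have hf : f y = P y := by rw [f, if_neg h3, if_pos h2]
    have hf1 : f1 y = P1 y := by rw [f1, if_neg h3, if_pos h2]
    have hf2 : f2 y = P2 y := by rw [f2, if_neg h3, if_pos h2]
    have hu : (0:ℝ) < y + 3 := by linarith [not_le.1 h3]
    have hu1 : y + 3 ≤ 1 := by linarith
    rw [hf1, hf2, ← add_div, div_le_iff₀ hy, sq_abs, sq_abs, hf]
    have e1 : (y+3)^20 ≤ (y+3)^11 := pow_le_pow_of_le_one hu.le hu1 (by norm_num)
    have e2 : (y+3)^18 ≤ (y+3)^11 := pow_le_pow_of_le_one hu.le hu1 (by norm_num)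
    have e3 : (0:ℝ) ≤ (y+3)^11 := pow_nonneg hu.le 11
    unfold P P1 P2
    nlinarith
  · by_cases h1 : y ≤ -1
    · have hf : f y = Q y := by rw [f, if_neg h3, if_neg h2, if_pos h1]
      have hf1 : f1 y = Q1 y := by rw [f1, if_neg h3, if_neg h2, if_pos h1]
      have hf2 : f2 y = Q2 y := by rw [f2, if_neg h3, if_neg h2, if_pos h1]
      have hy2 : (-2:ℝ) < y := not_le.1 h2
      obtain ⟨t, htdef⟩ : ∃ t : ℝ, t = -(y+1) := ⟨_, rfl⟩
      have hy' : y + 1 = -t := by rw [htdef]; ring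
      have ht0 : 0 ≤ t := by rw [htdef]; linarith
      have ht1 : t ≤ 1 := by rw [htdef]; linarith
      have p8 : (0:ℝ) ≤ t^8 := pow_nonneg ht0 8
      have p9 : (0:ℝ) ≤ t^9 := pow_nonneg ht0 9
      have p10 : (0:ℝ) ≤ t^10 := pow_nonneg ht0 10
      have q8 : t^8 ≤ 1 := pow_le_one₀ ht0 ht1
      have q9 : t^9 ≤ 1 := pow_le_one₀ ht0 ht1
      have q10 : t^10 ≤ 1 := pow_le_one₀ ht0 ht1
      have hfge : (1:ℝ)/4 ≤ f y := by
        have hQ : Q y = (1/4)*(19*t^11 - 22*t^10 + 4) := by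
          unfold Q; rw [hy']; ring
        have hkey := key ht0 ht1
        rw [hf, hQ]; linarith
      have e1 : Q1 y = (1/4)*(220*t^9 - 209*t^10) := by
        unfold Q1; rw [hy']; ring
      have e2 : Q2 y = (1/4)*(2090*t^9 - 1980*t^8) := by
        unfold Q2; rw [hy']; ring
      have hE1a : (0:ℝ) ≤ 220*t^9 - 209*t^10 := by nlinarith
      have hE1b : 220*t^9 - 209*t^10 ≤ 220 := by nlinarith
      have hE2a : (-1980:ℝ) ≤ 2090*t^9 - 1980*t^8 := by nlinarith
      have hE2b : 2090*t^9 - 1980*t^8 ≤ 2090 := by nlinarith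
      have hb1 : (Q1 y)^2 ≤ 3025 := by rw [e1]; nlinarith
      have hb2 : (Q2 y)^2 ≤ 273007 := by rw [e2]; nlinarith
      rw [hf1, hf2, ← add_div, div_le_iff₀ hy, sq_abs, sq_abs]
      linarith
    · have hf1 : f1 y = 0 := by rw [f1, if_neg h3, if_neg h2, if_neg h1]
      have hf2 : f2 y = 0 := by rw [f2, if_neg h3, if_neg h2, if_neg h1]
      rw [hf1, hf2]
      simp

/-- `χ` is `C²`, takes values in `[0,1]`, and satisfies
`|χ'|²/χ + |χ''|²/χ ≤ C` wherever `χ > 0`, for an absolute constant `C`. -/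
theorem chi_properties :
    ContDiff ℝ 2 chi ∧ (∀ x : ℝ, 0 ≤ chi x ∧ chi x ≤ 1) ∧
      ∃ C : ℝ, 0 < C ∧ ∀ x : ℝ, 0 < chi x →
        |deriv chi x| ^ 2 / chi x + |deriv (deriv chi) x| ^ 2 / chi x ≤ C := by
  refine ⟨contDiff_chi, fun x => by rw [chi_eq]; exact f_bounds _,
    10^7, by norm_num, fun x hx => ?_⟩
  rw [deriv_chi, deriv_chi1]
  rw [chi_eq] at hx ⊢
  have h1 : |chi1 x| = |f1 (-|x|)| := by
    unfold chi1
    rcases lt_or_ge x 0 with h | h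
    · rw [if_pos h, abs_of_neg h, neg_neg]
    · rw [if_neg (not_lt.2 h), abs_of_nonneg h, abs_neg]
  rw [h1, show chi2 x = f2 (-|x|) from rfl]
  exact quot _ hx
end
end

section
/- For every x ∈ ℝ³, every t ≠ 0, every sign μ ∈ {+1, -1}, and every k, l ∈ ℤ, the set S_{k,l}(t,x) = { ξ ∈ ℝ³ : |1 + μ (x·ξ)/(t|ξ|)| ≤ 2^l and 2^{k-1} ≤ |ξ| ≤ 2^k } has Lebesgue measure at most C · 2^{3k + l} for an absolute constant C independent of t, x, k, l, μ. -/
open MeasureTheory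

noncomputable section

local notation "E3" => EuclideanSpace ℝ (Fin 3)

/-- Area of a Euclidean annulus in the plane (as `Fin 2 → ℝ` with pi measure). -/
lemma annulus_vol (A B : ℝ) (hA : 0 ≤ A) :
    volume {w : Fin 2 → ℝ | w 0 ^ 2 + w 1 ^ 2 ∈ Set.Icc A B} ≤ ENNReal.ofReal (4 * (B - A)) := by
  rcases le_or_gt A B with hAB | hAB
  · have hB : 0 ≤ B := hA.trans hAB
    have hfm : Measurable fun w : Fin 2 → ℝ => w 0 ^ 2 + w 1 ^ 2 :=
      ((measurable_pi_apply 0).pow_const 2).add ((measurable_pi_apply 1).pow_const 2)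
    have hmeas : MeasurableSet {w : Fin 2 → ℝ | w 0 ^ 2 + w 1 ^ 2 ∈ Set.Icc A B} :=
      hfm measurableSet_Icc
    rw [← (EuclideanSpace.volume_preserving_symm_measurableEquiv_toLp (Fin 2)).measure_preimage
      hmeas.nullMeasurableSet]
    have hsub : (MeasurableEquiv.toLp 2 (Fin 2 → ℝ)).symm ⁻¹'
        {w : Fin 2 → ℝ | w 0 ^ 2 + w 1 ^ 2 ∈ Set.Icc A B} ⊆
        Metric.closedBall (0 : EuclideanSpace ℝ (Fin 2)) (Real.sqrt B) \
          Metric.ball 0 (Real.sqrt A) := by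
      intro y hy
      have hy' : y 0 ^ 2 + y 1 ^ 2 ∈ Set.Icc A B := hy
      have hnorm : ‖y‖ ^ 2 = y 0 ^ 2 + y 1 ^ 2 := by
        rw [EuclideanSpace.norm_eq, Real.sq_sqrt (by positivity)]
        simp [Fin.sum_univ_two, sq_abs]
      constructor
      · rw [Metric.mem_closedBall, dist_zero_right]
        rw [show Real.sqrt B = Real.sqrt B from rfl]
        have : ‖y‖ ^ 2 ≤ B := by rw [hnorm]; exact hy'.2
        nlinarith [Real.sq_sqrt hB, Real.sqrt_nonneg B, norm_nonneg y,
          abs_nonneg (‖y‖ - Real.sqrt B)]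
      · show ¬ y ∈ Metric.ball 0 (Real.sqrt A)
        rw [Metric.mem_ball, dist_zero_right, not_lt]
        have : A ≤ ‖y‖ ^ 2 := by rw [hnorm]; exact hy'.1
        calc Real.sqrt A ≤ Real.sqrt (‖y‖ ^ 2) := Real.sqrt_le_sqrt this
        _ = ‖y‖ := by rw [Real.sqrt_sq (norm_nonneg y)]
    have hballsub : Metric.ball (0 : EuclideanSpace ℝ (Fin 2)) (Real.sqrt A) ⊆
        Metric.closedBall 0 (Real.sqrt B) :=
      (Metric.ball_subset_ball (Real.sqrt_le_sqrt hAB)).trans Metric.ball_subset_closedBall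
    have hgamma : Real.Gamma ((Fintype.card (Fin 2) : ℝ) / 2 + 1) = 1 := by
      rw [Fintype.card_fin]; norm_num [Real.Gamma_two]
    have hcb : volume (Metric.closedBall (0 : EuclideanSpace ℝ (Fin 2)) (Real.sqrt B)) =
        ENNReal.ofReal (Real.pi * B) := by
      rw [EuclideanSpace.volume_closedBall, hgamma]
      rw [Fintype.card_fin, ← ENNReal.ofReal_pow (Real.sqrt_nonneg B)]
      rw [← ENNReal.ofReal_mul (by positivity)]
      rw [Real.sq_sqrt hB, Real.sq_sqrt Real.pi_pos.le]
      ring_nf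
    have hball : volume (Metric.ball (0 : EuclideanSpace ℝ (Fin 2)) (Real.sqrt A)) =
        ENNReal.ofReal (Real.pi * A) := by
      rw [EuclideanSpace.volume_ball, hgamma]
      rw [Fintype.card_fin, ← ENNReal.ofReal_pow (Real.sqrt_nonneg A)]
      rw [← ENNReal.ofReal_mul (by positivity)]
      rw [Real.sq_sqrt hA, Real.sq_sqrt Real.pi_pos.le]
      ring_nf
    calc volume ((MeasurableEquiv.toLp 2 (Fin 2 → ℝ)).symm ⁻¹'
        {w : Fin 2 → ℝ | w 0 ^ 2 + w 1 ^ 2 ∈ Set.Icc A B})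
        ≤ volume (Metric.closedBall (0 : EuclideanSpace ℝ (Fin 2)) (Real.sqrt B) \
          Metric.ball 0 (Real.sqrt A)) := measure_mono hsub
      _ = volume (Metric.closedBall (0 : EuclideanSpace ℝ (Fin 2)) (Real.sqrt B)) -
          volume (Metric.ball (0 : EuclideanSpace ℝ (Fin 2)) (Real.sqrt A)) := by
          apply measure_diff hballsub measurableSet_ball.nullMeasurableSet
          rw [hball]; exact ENNReal.ofReal_ne_top
      _ = ENNReal.ofReal (Real.pi * B) - ENNReal.ofReal (Real.pi * A) := by rw [hcb, hball]
      _ = ENNReal.ofReal (Real.pi * B - Real.pi * A) := by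
          rw [ENNReal.ofReal_sub _ (by positivity)]
      _ ≤ ENNReal.ofReal (4 * (B - A)) := by
          apply ENNReal.ofReal_le_ofReal
          nlinarith [Real.pi_le_four, hAB]
  · have : {w : Fin 2 → ℝ | w 0 ^ 2 + w 1 ^ 2 ∈ Set.Icc A B} = ∅ := by
      ext w; simp only [Set.mem_setOf_eq, Set.mem_Icc, Set.mem_empty_iff_false, iff_false, not_and]
      intro h1; linarith
    rw [this]; simp

/-- Key algebraic estimate : separation of angular variable controls separation of the
axial variable. -/
lemma key_alg (R s s' ρ2 : ℝ) (hρ : 0 < ρ2) (hss' : 0 ≤ s * s')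
    (h1 : Real.sqrt (s ^ 2 + ρ2) ≤ R) (h2 : Real.sqrt (s' ^ 2 + ρ2) ≤ R) :
    ρ2 * |s - s'| ≤ R ^ 3 * |s / Real.sqrt (s ^ 2 + ρ2) - s' / Real.sqrt (s' ^ 2 + ρ2)| := by
  set r := Real.sqrt (s ^ 2 + ρ2) with hr_def
  set r' := Real.sqrt (s' ^ 2 + ρ2) with hr'_def
  have hr_pos : 0 < r := Real.sqrt_pos.mpr (by positivity)
  have hr'_pos : 0 < r' := Real.sqrt_pos.mpr (by positivity)
  have hr2 : r ^ 2 = s ^ 2 + ρ2 := Real.sq_sqrt (by positivity)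
  have hr'2 : r' ^ 2 = s' ^ 2 + ρ2 := Real.sq_sqrt (by positivity)
  have hs_le : |s| ≤ r := by
    rw [hr_def, show s ^ 2 + ρ2 = s ^ 2 + ρ2 from rfl]
    calc |s| = Real.sqrt (s ^ 2) := (Real.sqrt_sq_eq_abs s).symm
    _ ≤ _ := Real.sqrt_le_sqrt (by linarith)
  have hs'_le : |s'| ≤ r' := by
    calc |s'| = Real.sqrt (s' ^ 2) := (Real.sqrt_sq_eq_abs s').symm
    _ ≤ _ := Real.sqrt_le_sqrt (by linarith)
  have hR_pos : 0 < R := lt_of_lt_of_le hr_pos h1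
  -- key identity
  have hkey : (s * r' - s' * r) * (s * r' + s' * r) = ρ2 * (s ^ 2 - s' ^ 2) := by
    have : (s * r' - s' * r) * (s * r' + s' * r) = s ^ 2 * r' ^ 2 - s' ^ 2 * r ^ 2 := by ring
    rw [this, hr2, hr'2]; ring
  -- same sign facts
  have habs_sum : |s * r' + s' * r| = |s| * r' + |s'| * r := by
    rcases mul_nonneg_iff.mp hss' with ⟨hs, hs'⟩ | ⟨hs, hs'⟩
    · rw [abs_of_nonneg (by positivity), abs_of_nonneg hs, abs_of_nonneg hs']
    · rw [abs_of_nonpos (by nlinarith), abs_of_nonpos hs, abs_of_nonpos hs']; ring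
  have habs_ss' : |s + s'| = |s| + |s'| := by
    rcases mul_nonneg_iff.mp hss' with ⟨hs, hs'⟩ | ⟨hs, hs'⟩
    · rw [abs_of_nonneg (by linarith), abs_of_nonneg hs, abs_of_nonneg hs']
    · rw [abs_of_nonpos (by linarith), abs_of_nonpos hs, abs_of_nonpos hs']; ring
  have habskey : |s * r' - s' * r| * (|s| * r' + |s'| * r) = ρ2 * (|s - s'| * (|s| + |s'|)) := by
    have h := congrArg abs hkey
    rw [abs_mul, habs_sum, abs_mul, show s ^ 2 - s' ^ 2 = (s - s') * (s + s') by ring,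
      abs_mul, habs_ss', abs_of_pos hρ] at h
    linarith [h]
  rcases eq_or_lt_of_le (add_nonneg (abs_nonneg s) (abs_nonneg s')) with hP | hP
  · -- |s| + |s'| = 0, so s = s' = 0
    have hs0 : s = 0 := by
      have := abs_nonneg s; have := abs_nonneg s'
      have : |s| = 0 := by linarith [hP]
      exact abs_eq_zero.mp this
    have hs'0 : s' = 0 := by
      have h1' := abs_nonneg s; have h2' := abs_nonneg s'
      have : |s'| = 0 := by linarith [hP]
      exact abs_eq_zero.mp this
    simp [hs0, hs'0]
  · -- main case
    have hM_le : |s| * r' + |s'| * r ≤ R * (|s| + |s'|) := by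
      have := abs_nonneg s; have := abs_nonneg s'
      nlinarith
    have hM_pos : 0 < |s| * r' + |s'| * r := by
      rcases lt_or_ge 0 |s| with hs | hs
      · nlinarith [mul_nonneg (abs_nonneg s') hr_pos.le, mul_pos hs hr'_pos]
      · have hs0 : |s| = 0 := le_antisymm hs (abs_nonneg s)
        have hs' : 0 < |s'| := by rw [hs0] at hP; linarith
        nlinarith [mul_pos hs' hr_pos, mul_nonneg (abs_nonneg s) hr'_pos.le]
    -- from habskey : |N| ≥ ρ2 |s - s'| / R
    have hN_ge : ρ2 * |s - s'| ≤ R * |s * r' - s' * r| := by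
      have h5 : |s * r' - s' * r| * (R * (|s| + |s'|)) ≥ ρ2 * (|s - s'| * (|s| + |s'|)) := by
        calc ρ2 * (|s - s'| * (|s| + |s'|)) = |s * r' - s' * r| * (|s| * r' + |s'| * r) :=
              habskey.symm
        _ ≤ |s * r' - s' * r| * (R * (|s| + |s'|)) := by
            apply mul_le_mul_of_nonneg_left hM_le (abs_nonneg _)
      have := hP
      nlinarith [abs_nonneg (s * r' - s' * r)]
    have hquot : |s / r - s' / r'| = |s * r' - s' * r| / (r * r') := by
      rw [div_sub_div _ _ (ne_of_gt hr_pos) (ne_of_gt hr'_pos), abs_div,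
        abs_of_pos (mul_pos hr_pos hr'_pos), show s * r' - r * s' = s * r' - s' * r by ring]
    rw [hquot, ← mul_div_assoc, le_div_iff₀ (mul_pos hr_pos hr'_pos)]
    calc ρ2 * |s - s'| * (r * r') ≤ ρ2 * |s - s'| * (R * R) :=
          mul_le_mul_of_nonneg_left (mul_le_mul h1 h2 hr'_pos.le hR_pos.le)
            (mul_nonneg hρ.le (abs_nonneg _))
    _ ≤ R * |s * r' - s' * r| * (R * R) :=
          mul_le_mul_of_nonneg_right hN_ge (mul_nonneg hR_pos.le hR_pos.le)
    _ = R ^ 3 * |s * r' - s' * r| := by ring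

/-- A set of reals with diameter bound has small measure. -/
lemma vol_le_of_diam (T : Set ℝ) (D : ℝ) (h : ∀ s ∈ T, ∀ s' ∈ T, |s - s'| ≤ D) :
    volume T ≤ ENNReal.ofReal (2 * D) := by
  rcases T.eq_empty_or_nonempty with rfl | ⟨s₀, hs₀⟩
  · simp
  have hsub : T ⊆ Set.Icc (s₀ - D) (s₀ + D) := by
    intro s hs
    have := h s hs s₀ hs₀
    rw [abs_le] at this
    constructor <;> linarith [this.1, this.2]
  calc volume T ≤ volume (Set.Icc (s₀ - D) (s₀ + D)) := measure_mono hsub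
  _ = ENNReal.ofReal (s₀ + D - (s₀ - D)) := Real.volume_Icc
  _ = ENNReal.ofReal (2 * D) := by ring_nf

set_option maxHeartbeats 4000000 in
/-- Measure estimate for the stationary-phase localized set
`S_{k,l}(t,x) = {ξ : |1 + μ x·ξ/(t|ξ|)| ≤ 2^l, 2^{k-1} ≤ |ξ| ≤ 2^k}`:
its Lebesgue measure is at most `C · 2^{3k+l}` uniformly in `t, x, k, l, μ`. -/
theorem measure_estimate_localized_set :
    ∃ C : ℝ, 0 < C ∧ ∀ (x : E3) (t μ : ℝ) (k l : ℤ), t ≠ 0 → (μ = 1 ∨ μ = -1) →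
      volume {ξ : E3 | |1 + μ * (inner ℝ x ξ : ℝ) / (t * ‖ξ‖)| ≤ (2 : ℝ) ^ l ∧
          ‖ξ‖ ∈ Set.Icc ((2 : ℝ) ^ (k - 1)) ((2 : ℝ) ^ k)} ≤
        ENNReal.ofReal (C * (2 : ℝ) ^ (3 * k + l)) := by
  refine ⟨2048, by norm_num, ?_⟩
  intro x t μ k l ht hμ
  have hμ1 : |μ| = 1 := by rcases hμ with rfl | rfl <;> simp
  set εl := (2:ℝ) ^ l with hεl_def
  set R := (2:ℝ) ^ k with hR_def
  have hεl : 0 < εl := by positivity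
  have hR : 0 < R := by positivity
  set S := {ξ : E3 | |1 + μ * (inner ℝ x ξ : ℝ) / (t * ‖ξ‖)| ≤ εl ∧
      ‖ξ‖ ∈ Set.Icc ((2 : ℝ) ^ (k - 1)) R} with hS_def
  have hk1 : (2:ℝ) ^ (k - 1) = R / 2 := by
    rw [hR_def, zpow_sub₀ (by norm_num : (2:ℝ) ≠ 0)]; norm_num
  have hRHS : (2048:ℝ) * (2:ℝ) ^ (3 * k + l) = 2048 * (R ^ 3 * εl) := by
    rw [zpow_add₀ (by norm_num : (2:ℝ) ≠ 0), show (3:ℤ) * k = k * 3 by ring, zpow_mul,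
      show ((3:ℤ)) = ((3:ℕ):ℤ) from rfl, zpow_natCast]
  rw [hRHS]
  -- basic facts about elements of S
  have hS_elem : ∀ ξ ∈ S, 0 < ‖ξ‖ ∧ R / 2 ≤ ‖ξ‖ ∧ ‖ξ‖ ≤ R := by
    intro ξ hξ
    obtain ⟨-, hn1, hn2⟩ := hξ
    rw [hk1] at hn1
    exact ⟨lt_of_lt_of_le (by positivity) hn1, hn1, hn2⟩
  -- case split
  rcases le_or_gt (1/8 : ℝ) εl with hl | hl
  · -- trivial case : bound by the ball of radius R
    have hsub : S ⊆ Metric.closedBall 0 R := by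
      intro ξ hξ
      rw [Metric.mem_closedBall, dist_zero_right]
      exact (hS_elem ξ hξ).2.2
    have hgamma : Real.Gamma ((Fintype.card (Fin 3) : ℝ) / 2 + 1) = 3/4 * Real.sqrt Real.pi := by
      rw [Fintype.card_fin]
      rw [show ((3:ℕ):ℝ)/2 + 1 = 3/2 + 1 by norm_num]
      rw [Real.Gamma_add_one (by norm_num), show (3:ℝ)/2 = 1/2 + 1 by norm_num,
        Real.Gamma_add_one (by norm_num), Real.Gamma_one_half_eq]
      ring
    have hsqrtpi : 0 < Real.sqrt Real.pi := Real.sqrt_pos.mpr Real.pi_pos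
    calc volume S ≤ volume (Metric.closedBall (0:E3) R) := measure_mono hsub
    _ = ENNReal.ofReal R ^ Fintype.card (Fin 3) *
        ENNReal.ofReal (Real.sqrt Real.pi ^ Fintype.card (Fin 3) /
          Real.Gamma ((Fintype.card (Fin 3) : ℝ) / 2 + 1)) :=
        EuclideanSpace.volume_closedBall (Fin 3) 0 R
    _ = ENNReal.ofReal (R ^ 3 * (Real.sqrt Real.pi ^ 3 / (3/4 * Real.sqrt Real.pi))) := by
        rw [hgamma, Fintype.card_fin, ← ENNReal.ofReal_pow hR.le, ← ENNReal.ofReal_mul (by positivity)]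
    _ ≤ ENNReal.ofReal (2048 * (R ^ 3 * εl)) := by
        apply ENNReal.ofReal_le_ofReal
        have hval : Real.sqrt Real.pi ^ 3 / (3/4 * Real.sqrt Real.pi) = 4/3 * Real.pi := by
          rw [pow_succ, Real.sq_sqrt Real.pi_pos.le]
          field_simp
        rw [hval]
        nlinarith [Real.pi_le_four, Real.pi_pos, pow_pos hR 3]
  · -- now εl < 1/8
    rcases le_or_gt ‖x‖ (|t|/2) with hb | hb
    · -- S is empty
      have hempty : S = ∅ := by
        rw [Set.eq_empty_iff_forall_notMem]
        intro ξ hξS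
        have hcond := hξS.1
        obtain ⟨hr0, -, -⟩ := hS_elem ξ hξS
        have ht' : 0 < |t| := abs_pos.mpr ht
        set u := μ * (inner ℝ x ξ : ℝ) / (t * ‖ξ‖) with hu_def
        have habs : |u| ≤ 1/2 := by
          rw [hu_def, abs_div, abs_mul, hμ1, one_mul, abs_mul, abs_norm]
          rw [div_le_iff₀ (by positivity)]
          have h1 : |(inner ℝ x ξ : ℝ)| ≤ ‖x‖ * ‖ξ‖ := abs_real_inner_le_norm x ξ
          nlinarith [norm_nonneg ξ]
        have h2 := le_abs_self (1 + u)
        have h3 := neg_abs_le u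
        linarith
      rw [hempty]
      simp
    · -- main case : ‖x‖ > |t|/2 and εl < 1/8
      have ht' : 0 < |t| := abs_pos.mpr ht
      have hxn : 0 < ‖x‖ := lt_of_le_of_lt (by positivity) hb
      have hx0 : x ≠ 0 := by intro h; rw [h, norm_zero] at hxn; exact lt_irrefl 0 hxn
      have hμ0 : μ ≠ 0 := by intro h; rw [h, abs_zero] at hμ1; norm_num at hμ1
      set b := μ * ‖x‖ / t with hb_def
      have hb_abs : |b| = ‖x‖ / |t| := by
        rw [hb_def, abs_div, abs_mul, hμ1, one_mul, abs_norm]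
      have hb_half : 1/2 < |b| := by
        rw [hb_abs, lt_div_iff₀ ht']; linarith
      have hbne : b ≠ 0 := by
        intro h; rw [h, abs_zero] at hb_half; linarith
      set β := b⁻¹ with hβ_def
      have hβ_ne : β ≠ 0 := inv_ne_zero hbne
      have hβ_abs : |β| < 2 := by
        rw [hβ_def, abs_inv]
        rw [inv_lt_iff_one_lt_mul₀ (abs_pos.mpr hbne)]
        nlinarith
      set c1 := min ((-1 - εl) * β) ((-1 + εl) * β) with hc1_def
      set c2 := max ((-1 - εl) * β) ((-1 + εl) * β) with hc2_def
      have hc21 : c2 - c1 ≤ 4 * εl := by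
        rw [hc2_def, hc1_def, max_sub_min_eq_abs]
        have h1 : |(-1 + εl) * β - (-1 - εl) * β| = 2 * εl * |β| := by
          rw [show (-1 + εl) * β - (-1 - εl) * β = 2 * εl * β by ring, abs_mul, abs_mul,
            abs_of_nonneg (by norm_num : (0:ℝ) ≤ 2), abs_of_pos hεl]
        rcases le_or_gt ((-1 - εl) * β) ((-1 + εl) * β) with h | h
        · rw [abs_of_nonneg (by linarith)] at h1 ⊢
          nlinarith [abs_nonneg β]
        · rw [abs_of_neg (by linarith)] at h1 ⊢
          nlinarith [abs_nonneg β]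
      have hc1c2pos : 0 < c1 * c2 := by
        rw [hc1_def, hc2_def, min_mul_max,
          show (-1 - εl) * β * ((-1 + εl) * β) = (1 - εl ^ 2) * β ^ 2 by ring]
        have h1 : 0 < 1 - εl ^ 2 := by nlinarith
        positivity
      have hc1c2 : c1 ≤ c2 := min_le_max
      -- rotation : an orthonormal basis whose first vector is x/‖x‖
      set e := ‖x‖⁻¹ • x with he_def
      have he_norm : ‖e‖ = 1 := by
        rw [he_def, norm_smul, Real.norm_eq_abs, abs_inv, abs_norm]
        exact inv_mul_cancel₀ hxn.ne'
      have horth : Orthonormal ℝ (({0} : Set (Fin 3)).restrict (fun _ : Fin 3 => e)) := by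
        constructor
        · intro i; exact he_norm
        · intro i j hij
          exfalso; apply hij
          apply Subtype.ext
          have hi := i.2; have hj := j.2
          simp only [Set.mem_singleton_iff] at hi hj
          rw [hi, hj]
      obtain ⟨bas, hbas⟩ := horth.exists_orthonormalBasis_extension_of_card_eq
        (by simp)
      have hbas0 : bas 0 = e := hbas 0 rfl
      have hinner_eq : ∀ ξ : E3, (inner ℝ x ξ : ℝ) = ‖x‖ * bas.repr ξ 0 := by
        intro ξ
        have hx_eq : x = ‖x‖ • e := by rw [he_def, smul_inv_smul₀ hxn.ne']
        conv_lhs => rw [hx_eq]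
        rw [real_inner_smul_left, ← hbas0, ← OrthonormalBasis.repr_apply_apply]
      have hnorm_eq : ∀ ξ : E3,
          ‖ξ‖ ^ 2 = (bas.repr ξ 0) ^ 2 + ((bas.repr ξ 1) ^ 2 + (bas.repr ξ 2) ^ 2) := by
        intro ξ
        rw [← LinearIsometryEquiv.norm_map bas.repr ξ, EuclideanSpace.norm_eq,
          Real.sq_sqrt (by positivity)]
        simp [Fin.sum_univ_three, sq_abs]
        ring
      -- measurability
      have hinner_cont : Continuous fun ξ : E3 => (inner ℝ x ξ : ℝ) :=
        Continuous.inner continuous_const continuous_id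
      have hfmeas : Measurable fun ξ : E3 => |1 + μ * (inner ℝ x ξ : ℝ) / (t * ‖ξ‖)| :=
        (measurable_const.add ((measurable_const.mul hinner_cont.measurable).div
          (measurable_norm.const_mul t))).abs
      have hSmeas : MeasurableSet S := by
        rw [hS_def, Set.setOf_and]
        exact (measurableSet_le hfmeas measurable_const).inter
          (measurable_norm measurableSet_Icc)
      -- the measure-preserving chart
      set Φ : E3 ≃ᵐ ℝ × (Fin 2 → ℝ) :=
        (bas.measurableEquiv.trans (MeasurableEquiv.toLp 2 (Fin 3 → ℝ)).symm).trans
          (MeasurableEquiv.piFinSuccAbove (fun _ => ℝ) 0) with hΦ_def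
      have hΦ : MeasurePreserving Φ volume volume := by
        exact (volume_preserving_piFinSuccAbove (fun _ : Fin 3 => ℝ) 0).comp
          ((EuclideanSpace.volume_preserving_symm_measurableEquiv_toLp (Fin 3)).comp
            bas.measurePreserving_measurableEquiv)
      have hΦs : MeasurePreserving Φ.symm volume volume := MeasurePreserving.symm Φ hΦ
      have hΦ_app : ∀ ξ : E3, Φ ξ =
          (bas.repr ξ 0, fun j : Fin 2 => bas.repr ξ ((0 : Fin 3).succAbove j)) := fun _ => rfl
      have hcoords : ∀ (s : ℝ) (w : Fin 2 → ℝ),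
          bas.repr (Φ.symm (s, w)) 0 = s ∧
          ‖Φ.symm (s, w)‖ ^ 2 = s ^ 2 + (w 0 ^ 2 + w 1 ^ 2) := by
        intro s w
        have h1 : Φ (Φ.symm (s, w)) = (s, w) := Φ.apply_symm_apply (s, w)
        rw [hΦ_app] at h1
        have hs : bas.repr (Φ.symm (s, w)) 0 = s := congrArg Prod.fst h1
        have hw : ∀ j : Fin 2, bas.repr (Φ.symm (s, w)) ((0 : Fin 3).succAbove j) = w j :=
          fun j => congrFun (congrArg Prod.snd h1) j
        have e0 : ((0 : Fin 3).succAbove (0 : Fin 2)) = 1 := by decide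
        have e1 : ((0 : Fin 3).succAbove (1 : Fin 2)) = 2 := by decide
        have h0 := hw 0; have h1' := hw 1
        rw [e0] at h0; rw [e1] at h1'
        exact ⟨hs, by rw [hnorm_eq, hs, h0, h1']⟩
      -- angular localization for elements of S
      have habs_le : ∀ ξ ∈ S, |bas.repr ξ 0| ≤ ‖ξ‖ := by
        intro ξ _
        have h1 : (bas.repr ξ 0) ^ 2 ≤ ‖ξ‖ ^ 2 := by
          nlinarith [hnorm_eq ξ, sq_nonneg (bas.repr ξ 1), sq_nonneg (bas.repr ξ 2)]
        have h2 := Real.sqrt_le_sqrt h1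
        rwa [Real.sqrt_sq_eq_abs, Real.sqrt_sq (norm_nonneg ξ)] at h2
      have hc_mem : ∀ ξ ∈ S, c1 ≤ bas.repr ξ 0 / ‖ξ‖ ∧ bas.repr ξ 0 / ‖ξ‖ ≤ c2 := by
        intro ξ hξ
        obtain ⟨hr0, hr1, hr2⟩ := hS_elem ξ hξ
        have hcond := hξ.1
        set u := μ * (inner ℝ x ξ : ℝ) / (t * ‖ξ‖) with hu_def
        rw [abs_le] at hcond
        have hu1 : -1 - εl ≤ u := by linarith [hcond.1]
        have hu2 : u ≤ -1 + εl := by linarith [hcond.2]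
        have hcu : bas.repr ξ 0 / ‖ξ‖ = β * u := by
          rw [hu_def, hinner_eq ξ, hβ_def, hb_def]
          field_simp
        rw [hcu]
        rcases le_or_gt 0 β with hβp | hβp
        · constructor
          · calc c1 ≤ (-1 - εl) * β := min_le_left _ _
            _ ≤ β * u := by nlinarith
          · calc β * u ≤ (-1 + εl) * β := by nlinarith
            _ ≤ c2 := le_max_right _ _
        · constructor
          · calc c1 ≤ (-1 + εl) * β := min_le_right _ _
            _ ≤ β * u := by nlinarith
          · calc β * u ≤ (-1 - εl) * β := by nlinarith
            _ ≤ c2 := le_max_left _ _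
      -- |c| between |c1| and |c2|
      have hc_abs_mem : ∀ d : ℝ, c1 ≤ d → d ≤ c2 →
          min |c1| |c2| ≤ |d| ∧ |d| ≤ max |c1| |c2| := by
        intro d hd1 hd2
        rcases lt_or_ge 0 c1 with hpos | hile
        · have hd0 : 0 < d := lt_of_lt_of_le hpos hd1
          rw [abs_of_pos hd0, abs_of_pos hpos, abs_of_pos (lt_of_lt_of_le hpos hc1c2)]
          exact ⟨(min_le_left _ _).trans hd1, hd2.trans (le_max_right _ _)⟩
        · have hc1neg : c1 < 0 := by
            rcases lt_or_eq_of_le hile with h | h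
            · exact h
            · exfalso; rw [h] at hc1c2pos; simp at hc1c2pos
          have hc2neg : c2 < 0 := by nlinarith
          have hdneg : d < 0 := lt_of_le_of_lt hd2 hc2neg
          rw [abs_of_neg hdneg, abs_of_neg hc1neg, abs_of_neg hc2neg]
          constructor
          · exact (min_le_right _ _).trans (by linarith)
          · exact le_trans (by linarith) (le_max_left _ _)
      -- split S
      set cf : E3 → ℝ := fun ξ => bas.repr ξ 0 / ‖ξ‖ with hcf_def
      have hcf_meas : Measurable cf := by
        apply Measurable.div
        · exact (EuclideanSpace.proj (0 : Fin 3)).continuous.measurable.comp bas.repr.continuous.measurable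
        · exact measurable_norm
      set S₁ := S ∩ {ξ : E3 | 1/2 ≤ |cf ξ|} with hS1_def
      set S₂ := S ∩ {ξ : E3 | |cf ξ| ≤ 1/2} with hS2_def
      have hS1m : MeasurableSet S₁ :=
        hSmeas.inter (measurableSet_le measurable_const hcf_meas.abs)
      have hS2m : MeasurableSet S₂ :=
        hSmeas.inter (measurableSet_le hcf_meas.abs measurable_const)
      have hcover : S ⊆ S₁ ∪ S₂ := by
        intro ξ hξ
        rcases le_total (1/2 : ℝ) |cf ξ| with h | h
        · exact Or.inl ⟨hξ, h⟩
        · exact Or.inr ⟨hξ, h⟩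
      have hm1M1_aux : max |c1| |c2| - min |c1| |c2| ≤ c2 - c1 := by
        have h4 := abs_abs_sub_abs_le_abs_sub c1 c2
        have h5 : |c1 - c2| = c2 - c1 := by
          rw [abs_sub_comm, abs_of_nonneg (by linarith [hc1c2])]
        rcases le_total |c1| |c2| with h | h
        · rw [max_eq_right h, min_eq_left h]
          rw [abs_sub_comm] at h4
          rw [abs_of_nonneg (by linarith)] at h4
          linarith
        · rw [max_eq_left h, min_eq_right h]
          rw [abs_of_nonneg (by linarith)] at h4
          linarith
      have hc1ne : c1 ≠ 0 := by
        intro h; rw [h, zero_mul] at hc1c2pos; exact lt_irrefl 0 hc1c2pos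
      have hkey1 : volume S₁ ≤ ENNReal.ofReal (1024 * (R ^ 3 * εl)) := by
        set M1 := min (max |c1| |c2|) 1 with hM1_def
        set m1 := max (min |c1| |c2|) (1/2 : ℝ) with hm1_def
        have hM1pos : 0 < M1 :=
          lt_min (lt_of_lt_of_le (abs_pos.mpr hc1ne) (le_max_left _ _)) one_pos
        have hM1le1 : M1 ≤ 1 := min_le_right _ _
        have hm1half : 1/2 ≤ m1 := le_max_right _ _
        have hm1M1 : M1 - m1 ≤ c2 - c1 := by
          have h1 : M1 ≤ max |c1| |c2| := min_le_left _ _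
          have h2 : min |c1| |c2| ≤ m1 := le_max_left _ _
          linarith [hm1M1_aux]
        have hA_nonneg : ∀ s : ℝ, 0 ≤ s ^ 2 * (1 / M1 ^ 2 - 1) := by
          intro s
          have h1 : M1 ^ 2 ≤ 1 := by nlinarith only [hM1pos, hM1le1]
          have h2 : (1:ℝ) ≤ 1 / M1 ^ 2 := by
            rw [le_div_iff₀ (by positivity)]; linarith only [h1]
          nlinarith only [sq_nonneg s, h2]
        set T₁ := Φ.symm ⁻¹' S₁ with hT1_def
        have hT₁m : MeasurableSet T₁ := Φ.symm.measurable hS1m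
        have hpre : volume T₁ = volume S₁ := hΦs.measure_preimage hS1m.nullMeasurableSet
        rw [← hpre, Measure.volume_eq_prod, Measure.prod_apply hT₁m]
        have hslice : ∀ s : ℝ, volume (Prod.mk s ⁻¹' T₁) ≤
            (Set.Icc (-R) R).indicator
              (fun _ => ENNReal.ofReal (4 * (128 * εl * R ^ 2))) s := by
          intro s
          have hfact : ∀ w : Fin 2 → ℝ, w ∈ Prod.mk s ⁻¹' T₁ →
              |s| ≤ R ∧ s ^ 2 * (1 / M1 ^ 2 - 1) ≤ w 0 ^ 2 + w 1 ^ 2 ∧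
                w 0 ^ 2 + w 1 ^ 2 ≤ s ^ 2 * (1 / M1 ^ 2 - 1) + 128 * εl * R ^ 2 := by
            intro w hw
            have hξmem : Φ.symm (s, w) ∈ S₁ := hw
            obtain ⟨hξS, hcξ⟩ := hξmem
            obtain ⟨hr0, hr1, hr2⟩ := hS_elem _ hξS
            obtain ⟨hs_eq, hn_eq⟩ := hcoords s w
            have hd1 : c1 ≤ s / ‖Φ.symm (s, w)‖ := by
              have h := (hc_mem _ hξS).1; rwa [hs_eq] at h
            have hd2 : s / ‖Φ.symm (s, w)‖ ≤ c2 := by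
              have h := (hc_mem _ hξS).2; rwa [hs_eq] at h
            have habsR : |s| ≤ ‖Φ.symm (s, w)‖ := by
              have h := habs_le _ hξS; rwa [hs_eq] at h
            have hchalf : 1/2 ≤ |s / ‖Φ.symm (s, w)‖| := by
              have h : 1/2 ≤ |cf (Φ.symm (s, w))| := hcξ
              rwa [show cf (Φ.symm (s,w)) = bas.repr (Φ.symm (s,w)) 0 /
                ‖Φ.symm (s,w)‖ from rfl, hs_eq] at h
            obtain ⟨hmem1, hmem2⟩ := hc_abs_mem _ hd1 hd2
            set r : ℝ := ‖Φ.symm (s, w)‖ with hr_def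
            set d : ℝ := s / r with hd_def
            have hsd : s = d * r := by rw [hd_def]; field_simp
            have hdM : |d| ≤ M1 := by
              apply le_min hmem2
              rw [hd_def, abs_div, abs_norm]
              exact (div_le_one hr0).mpr habsR
            have hdm : m1 ≤ |d| := max_le hmem1 hchalf
            have hm1M1le : m1 ≤ M1 := hdm.trans hdM
            have hM1half : 1/2 ≤ M1 := le_trans hm1half hm1M1le
            have hρ : w 0 ^ 2 + w 1 ^ 2 = r ^ 2 - s ^ 2 := by linarith [hn_eq]
            have hs2 : s ^ 2 = d ^ 2 * r ^ 2 := by rw [hsd]; ring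
            have hd2M : d ^ 2 ≤ M1 ^ 2 := by
              nlinarith only [sq_abs d, abs_nonneg d, hdM]
            have hd2m : m1 ^ 2 ≤ d ^ 2 := by
              nlinarith only [sq_abs d, abs_nonneg d, hdm, hm1half]
            have hid : (w 0 ^ 2 + w 1 ^ 2) * M1 ^ 2 - s ^ 2 * (1 - M1 ^ 2) =
                r ^ 2 * (M1 ^ 2 - d ^ 2) := by rw [hρ, hs2]; ring
            refine ⟨habsR.trans hr2, ?_, ?_⟩
            · rw [show s ^ 2 * (1 / M1 ^ 2 - 1) = s ^ 2 * (1 - M1 ^ 2) / M1 ^ 2 by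
                field_simp, div_le_iff₀ (by positivity)]
              linarith only [hid, mul_nonneg (sq_nonneg r) (sub_nonneg.mpr hd2M)]
            · rw [show s ^ 2 * (1 / M1 ^ 2 - 1) + 128 * εl * R ^ 2 =
                (s ^ 2 * (1 - M1 ^ 2) + 128 * εl * R ^ 2 * M1 ^ 2) / M1 ^ 2 by
                field_simp, le_div_iff₀ (by positivity)]
              have hr2R : r ^ 2 ≤ R ^ 2 := by
                nlinarith only [hr0.le, hr2]
              have h6 : r ^ 2 * (M1 ^ 2 - d ^ 2) ≤ R ^ 2 * (M1 ^ 2 - m1 ^ 2) := by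
                linarith only [mul_nonneg (sub_nonneg.mpr hr2R) (sub_nonneg.mpr hd2M),
                  mul_nonneg (sq_nonneg R) (sub_nonneg.mpr hd2m)]
              have h7 : M1 ^ 2 - m1 ^ 2 ≤ 8 * εl := by
                have hp : (M1 - m1) * (M1 + m1) ≤ (4 * εl) * 2 := by
                  apply mul_le_mul (by linarith only [hm1M1, hc21])
                    (by linarith only [hM1le1, hm1M1le])
                    (by linarith only [hm1half, hm1M1le]) (by positivity)
                nlinarith only [hp]
              have h8 : R ^ 2 * (M1 ^ 2 - m1 ^ 2) ≤ 8 * εl * R ^ 2 := by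
                nlinarith only [h7, sq_nonneg R]
              have hM14 : 1/4 ≤ M1 ^ 2 := by nlinarith only [hM1half]
              have h9 : 8 * εl * R ^ 2 ≤ 128 * εl * R ^ 2 * M1 ^ 2 := by
                nlinarith only [mul_nonneg (mul_nonneg hεl.le (sq_nonneg R))
                  (sub_nonneg.mpr hM14), mul_nonneg hεl.le (sq_nonneg R)]
              linarith only [hid, h6, h8, h9]
          rcases Set.eq_empty_or_nonempty (Prod.mk s ⁻¹' T₁) with hemp | ⟨w₀, hw₀⟩
          · rw [hemp, measure_empty]; exact zero_le
          have hsmem : s ∈ Set.Icc (-R) R := by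
            have h := (hfact w₀ hw₀).1
            rw [abs_le] at h
            exact ⟨h.1, h.2⟩
          rw [Set.indicator_of_mem hsmem]
          have hsub : Prod.mk s ⁻¹' T₁ ⊆ {w : Fin 2 → ℝ | w 0 ^ 2 + w 1 ^ 2 ∈
              Set.Icc (s ^ 2 * (1 / M1 ^ 2 - 1))
                (s ^ 2 * (1 / M1 ^ 2 - 1) + 128 * εl * R ^ 2)} := by
            intro w hw
            exact ⟨(hfact w hw).2.1, (hfact w hw).2.2⟩
          refine (measure_mono hsub).trans ?_
          have h := annulus_vol (s ^ 2 * (1 / M1 ^ 2 - 1))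
            (s ^ 2 * (1 / M1 ^ 2 - 1) + 128 * εl * R ^ 2) (hA_nonneg s)
          rwa [show s ^ 2 * (1 / M1 ^ 2 - 1) + 128 * εl * R ^ 2 -
            s ^ 2 * (1 / M1 ^ 2 - 1) = 128 * εl * R ^ 2 by ring] at h
        calc ∫⁻ s, volume (Prod.mk s ⁻¹' T₁) ≤
            ∫⁻ s, (Set.Icc (-R) R).indicator
              (fun _ => ENNReal.ofReal (4 * (128 * εl * R ^ 2))) s := lintegral_mono hslice
        _ = ENNReal.ofReal (4 * (128 * εl * R ^ 2)) * volume (Set.Icc (-R) R) := by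
            rw [lintegral_indicator measurableSet_Icc, setLIntegral_const]
        _ = ENNReal.ofReal (4 * (128 * εl * R ^ 2)) * ENNReal.ofReal (R - -R) := by
            rw [Real.volume_Icc]
        _ = ENNReal.ofReal (4 * (128 * εl * R ^ 2) * (R - -R)) := by
            rw [← ENNReal.ofReal_mul (by positivity)]
        _ = ENNReal.ofReal (1024 * (R ^ 3 * εl)) := by
            rw [show 4 * (128 * εl * R ^ 2) * (R - -R) = 1024 * (R ^ 3 * εl) by ring]
      have hkey2 : volume S₂ ≤ ENNReal.ofReal (256 * (R ^ 3 * εl)) := by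
        set T₂ := Φ.symm ⁻¹' S₂ with hT2_def
        have hT₂m : MeasurableSet T₂ := Φ.symm.measurable hS2m
        have hpre : volume T₂ = volume S₂ := hΦs.measure_preimage hS2m.nullMeasurableSet
        rw [← hpre, Measure.volume_eq_prod, Measure.prod_apply_symm hT₂m]
        have hslice : ∀ w : Fin 2 → ℝ, volume ((fun s => (s, w)) ⁻¹' T₂) ≤
            (Set.pi Set.univ fun _ : Fin 2 => Set.Icc (-R) R).indicator
              (fun _ => ENNReal.ofReal (2 * (32 * εl * R))) w := by
          intro w
          set ρ2 : ℝ := w 0 ^ 2 + w 1 ^ 2 with hρ2_def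
          clear_value ρ2
          have hfact : ∀ s : ℝ, s ∈ (fun s => (s, w)) ⁻¹' T₂ →
              Real.sqrt (s ^ 2 + ρ2) ≤ R ∧ (3/16) * R ^ 2 ≤ ρ2 ∧
                c1 ≤ s / Real.sqrt (s ^ 2 + ρ2) ∧ s / Real.sqrt (s ^ 2 + ρ2) ≤ c2 ∧
                |s| ≤ R := by
            intro s hs
            have hξmem : Φ.symm (s, w) ∈ S₂ := hs
            obtain ⟨hξS, hcξ⟩ := hξmem
            obtain ⟨hr0, hr1, hr2⟩ := hS_elem _ hξS
            obtain ⟨hs_eq, hn_eq⟩ := hcoords s w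
            have hd1 : c1 ≤ s / ‖Φ.symm (s, w)‖ := by
              have h := (hc_mem _ hξS).1; rwa [hs_eq] at h
            have hd2 : s / ‖Φ.symm (s, w)‖ ≤ c2 := by
              have h := (hc_mem _ hξS).2; rwa [hs_eq] at h
            have habsR : |s| ≤ ‖Φ.symm (s, w)‖ := by
              have h := habs_le _ hξS; rwa [hs_eq] at h
            have hchalf : |s / ‖Φ.symm (s, w)‖| ≤ 1/2 := by
              have h : |cf (Φ.symm (s, w))| ≤ 1/2 := hcξ
              rwa [show cf (Φ.symm (s,w)) = bas.repr (Φ.symm (s,w)) 0 /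
                ‖Φ.symm (s,w)‖ from rfl, hs_eq] at h
            set r : ℝ := ‖Φ.symm (s, w)‖ with hr_def
            have hsqrt : Real.sqrt (s ^ 2 + ρ2) = r := by
              rw [hρ2_def, ← hn_eq, Real.sqrt_sq hr0.le]
            have hs2r : s ^ 2 ≤ r ^ 2 / 4 := by
              have h1 : |s| / r ≤ 1/2 := by
                rwa [abs_div, abs_norm] at hchalf
              have h2 : |s| ≤ r / 2 := by
                rw [div_le_iff₀ hr0] at h1; linarith
              nlinarith only [sq_abs s, abs_nonneg s, h2, hr0.le]
            have hρlow : (3/16) * R ^ 2 ≤ ρ2 := by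
              have h1 : ρ2 = r ^ 2 - s ^ 2 := by rw [hρ2_def]; linarith only [hn_eq]
              have hrR : R ^ 2 / 4 ≤ r ^ 2 := by
                have h2 := mul_le_mul hr1 hr1 (by positivity) hr0.le
                nlinarith only [h2]
              linarith only [h1, hs2r, hrR]
            refine ⟨by rw [hsqrt]; exact hr2, hρlow, ?_, ?_, habsR.trans hr2⟩
            · rw [hsqrt]; exact hd1
            · rw [hsqrt]; exact hd2
          rcases Set.eq_empty_or_nonempty ((fun s => (s, w)) ⁻¹' T₂) with hemp | ⟨s₀, hs₀⟩
          · rw [hemp, measure_empty]; exact zero_le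
          have hρpos : 0 < ρ2 := by
            have h := (hfact s₀ hs₀).2.1
            have h4 : (0:ℝ) < 3/16 * R ^ 2 := by positivity
            linarith only [h, h4]
          have hwmem : w ∈ Set.pi Set.univ fun _ : Fin 2 => Set.Icc (-R) R := by
            have hsq : Real.sqrt (s₀ ^ 2 + ρ2) ≤ R := (hfact s₀ hs₀).1
            have hρR : ρ2 ≤ R ^ 2 := by
              have h1 : s₀ ^ 2 + ρ2 ≤ R ^ 2 := by
                have h2 := Real.sq_sqrt (by positivity : (0:ℝ) ≤ s₀ ^ 2 + ρ2)
                nlinarith only [h2, hsq, Real.sqrt_nonneg (s₀ ^ 2 + ρ2)]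
              nlinarith only [h1, sq_nonneg s₀]
            have hcoordR : ∀ j : Fin 2, w j ∈ Set.Icc (-R) R := by
              intro j
              have hwj : w j ^ 2 ≤ R ^ 2 := by
                have h0 : w 0 ^ 2 + w 1 ^ 2 ≤ R ^ 2 := by
                  rw [hρ2_def] at hρR; exact hρR
                fin_cases j
                · show w 0 ^ 2 ≤ R ^ 2; linarith only [h0, sq_nonneg (w 1)]
                · show w 1 ^ 2 ≤ R ^ 2; linarith only [h0, sq_nonneg (w 0)]
              have habs : |w j| ≤ R := by
                have h3 := Real.sqrt_le_sqrt hwj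
                rwa [Real.sqrt_sq_eq_abs, Real.sqrt_sq hR.le] at h3
              rw [abs_le] at habs
              exact ⟨habs.1, habs.2⟩
            intro i _
            exact hcoordR i
          rw [Set.indicator_of_mem hwmem]
          apply vol_le_of_diam _ (32 * εl * R)
          intro s hsm s' hsm'
          obtain ⟨hsq1, -, hc1a, hc2a, -⟩ := hfact s hsm
          obtain ⟨hsq2, -, hc1b, hc2b, -⟩ := hfact s' hsm'
          -- same signs
          have hss' : 0 ≤ s * s' := by
            have hr1pos : 0 < Real.sqrt (s ^ 2 + ρ2) := Real.sqrt_pos.mpr (by positivity)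
            have hr2pos : 0 < Real.sqrt (s' ^ 2 + ρ2) := Real.sqrt_pos.mpr (by positivity)
            rcases lt_or_ge 0 c1 with hpos | hneg
            · have h1 : 0 < s / Real.sqrt (s ^ 2 + ρ2) := lt_of_lt_of_le hpos hc1a
              have h2 : 0 < s' / Real.sqrt (s' ^ 2 + ρ2) := lt_of_lt_of_le hpos hc1b
              have hspos : 0 < s := by
                by_contra h
                push_neg at h
                exact absurd h1 (not_lt.mpr (div_nonpos_iff.mpr (Or.inr ⟨h, hr1pos.le⟩)))
              have hs'pos : 0 < s' := by
                by_contra h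
                push_neg at h
                exact absurd h2 (not_lt.mpr (div_nonpos_iff.mpr (Or.inr ⟨h, hr2pos.le⟩)))
              positivity
            · have hc1neg : c1 < 0 := lt_of_le_of_ne hneg (by
                intro h; rw [h, zero_mul] at hc1c2pos; exact lt_irrefl 0 hc1c2pos)
              have hc2neg : c2 < 0 := by nlinarith
              have h1 : s / Real.sqrt (s ^ 2 + ρ2) < 0 := lt_of_le_of_lt hc2a hc2neg
              have h2 : s' / Real.sqrt (s' ^ 2 + ρ2) < 0 := lt_of_le_of_lt hc2b hc2neg
              have hsneg : s < 0 := by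
                by_contra h
                push_neg at h
                exact absurd h1 (not_lt.mpr (div_nonneg h hr1pos.le))
              have hs'neg : s' < 0 := by
                by_contra h
                push_neg at h
                exact absurd h2 (not_lt.mpr (div_nonneg h hr2pos.le))
              exact (mul_pos_of_neg_of_neg hsneg hs'neg).le
          have hkey := key_alg R s s' ρ2 hρpos hss' hsq1 hsq2
          have hcdiff : |s / Real.sqrt (s ^ 2 + ρ2) - s' / Real.sqrt (s' ^ 2 + ρ2)| ≤
              c2 - c1 := by
            rw [abs_le]; constructor <;> [linarith; linarith]
          have hH : ρ2 * |s - s'| ≤ R ^ 3 * (4 * εl) := by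
            calc ρ2 * |s - s'| ≤ R ^ 3 * |s / Real.sqrt (s ^ 2 + ρ2) -
                s' / Real.sqrt (s' ^ 2 + ρ2)| := hkey
            _ ≤ R ^ 3 * (c2 - c1) :=
                mul_le_mul_of_nonneg_left hcdiff (by positivity)
            _ ≤ R ^ 3 * (4 * εl) := mul_le_mul_of_nonneg_left hc21 (by positivity)
          have hρ316 : (3/16) * R ^ 2 ≤ ρ2 := (hfact s hsm).2.1
          have hstep : (3/16) * R ^ 2 * |s - s'| ≤ 4 * εl * R ^ 3 := by
            calc (3/16) * R ^ 2 * |s - s'| ≤ ρ2 * |s - s'| :=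
                mul_le_mul_of_nonneg_right hρ316 (abs_nonneg _)
            _ ≤ R ^ 3 * (4 * εl) := hH
            _ = 4 * εl * R ^ 3 := by ring
          by_contra hcon
          push_neg at hcon
          have h2 : (3/16) * R ^ 2 * (32 * εl * R) < (3/16) * R ^ 2 * |s - s'| :=
            mul_lt_mul_of_pos_left hcon (by positivity)
          have h3 : (0:ℝ) < εl * R ^ 3 := by positivity
          linarith only [h2, hstep, h3]
        calc ∫⁻ w, volume ((fun s => (s, w)) ⁻¹' T₂) ≤
            ∫⁻ w, (Set.pi Set.univ fun _ : Fin 2 => Set.Icc (-R) R).indicator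
              (fun _ => ENNReal.ofReal (2 * (32 * εl * R))) w := lintegral_mono hslice
        _ = ENNReal.ofReal (2 * (32 * εl * R)) *
            volume (Set.pi Set.univ fun _ : Fin 2 => Set.Icc (-R) R) := by
            rw [lintegral_indicator (MeasurableSet.univ_pi fun _ => measurableSet_Icc),
              setLIntegral_const]
        _ = ENNReal.ofReal (2 * (32 * εl * R)) * ENNReal.ofReal (R - -R) ^ 2 := by
            rw [volume_pi_pi]
            simp [Real.volume_Icc]
        _ = ENNReal.ofReal (2 * (32 * εl * R) * ((R - -R) * (R - -R))) := by
            have ha2 : (0:ℝ) ≤ 2 * (32 * εl * R) := by nlinarith only [mul_pos hεl hR]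
            have hb2 : (0:ℝ) ≤ R - -R := by linarith only [hR]
            rw [sq, ← ENNReal.ofReal_mul hb2, ← ENNReal.ofReal_mul ha2]
        _ = ENNReal.ofReal (256 * (R ^ 3 * εl)) := by
            rw [show 2 * (32 * εl * R) * ((R - -R) * (R - -R)) = 256 * (R ^ 3 * εl) by ring]
      calc volume S ≤ volume (S₁ ∪ S₂) := measure_mono hcover
      _ ≤ volume S₁ + volume S₂ := measure_union_le _ _
      _ ≤ ENNReal.ofReal (1024 * (R ^ 3 * εl)) + ENNReal.ofReal (256 * (R ^ 3 * εl)) :=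
          add_le_add hkey1 hkey2
      _ = ENNReal.ofReal (1024 * (R ^ 3 * εl) + 256 * (R ^ 3 * εl)) := by
          rw [ENNReal.ofReal_add (by positivity) (by positivity)]
      _ ≤ ENNReal.ofReal (2048 * (R ^ 3 * εl)) := by
          apply ENNReal.ofReal_le_ofReal
          nlinarith [pow_pos hR 3]
end
end
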